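/- Let A ∈ ℝ^{m×m} be symmetric positive definite and B ∈ ℝ^m. Then the linear complementarity problem LCP(A,B) — find λ ∈ ℝ^m with B + Aλ ≥ 0, λ ≥ 0, λ * (B + Aλ) = 0 — has a unique solution. -/

import Mathlib

open Matrix
open scoped RealInnerProductSpace

lemma lcp_inner_eq {m : ℕ} (A : Matrix (Fin m) (Fin m) ℝ) (x : EuclideanSpace ℝ (Fin m)) :
    ⟪x, (Matrix.toEuclideanLin A) x⟫
      = (WithLp.equiv 2 _ x) ⬝ᵥ A.mulVec (WithLp.equiv 2 _ x) := by
  simp [PiLp.inner_apply, Matrix.toEuclideanLin_apply, dotProduct,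
    RCLike.inner_apply, mul_comm]

lemma lcp_coercive {m : ℕ} (A : Matrix (Fin m) (Fin m) ℝ) (hA : A.PosDef) (hm : 0 < m) :
    ∃ α > 0, ∀ x : EuclideanSpace ℝ (Fin m),
      α * ‖x‖ ^ 2 ≤ ⟪x, (Matrix.toEuclideanLin A) x⟫ := by
  haveI : Nonempty (Fin m) := ⟨⟨0, hm⟩⟩
  set L := Matrix.toEuclideanLin A with hL
  have hcont : Continuous fun x : EuclideanSpace ℝ (Fin m) => ⟪x, L x⟫ :=
    continuous_id.inner (LinearMap.continuous_of_finiteDimensional L)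
  obtain ⟨x₀, hx₀mem, hmin⟩ := (isCompact_sphere (0 : EuclideanSpace ℝ (Fin m)) 1).exists_isMinOn
    (NormedSpace.sphere_nonempty.mpr zero_le_one) hcont.continuousOn
  have hx₀norm : ‖x₀‖ = 1 := by simpa using hx₀mem
  have hx₀ne : x₀ ≠ 0 := by intro h; rw [h] at hx₀norm; simp at hx₀norm
  have hpos : ∀ x : EuclideanSpace ℝ (Fin m), x ≠ 0 → 0 < ⟪x, L x⟫ := by
    intro x hx
    rw [hL, lcp_inner_eq]
    have hx' : (WithLp.equiv 2 (Fin m → ℝ)) x ≠ 0 := by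
      simpa using (WithLp.equiv 2 (Fin m → ℝ)).injective.ne hx
    have := hA.dotProduct_mulVec_pos (x := (WithLp.equiv 2 (Fin m → ℝ)) x) (by simpa using hx')
    simpa using this
  refine ⟨⟪x₀, L x₀⟫, hpos x₀ hx₀ne, fun x => ?_⟩
  rcases eq_or_ne x 0 with rfl | hx
  · simp
  · have hnx : (0:ℝ) < ‖x‖ := norm_pos_iff.mpr hx
    have humem : ‖x‖⁻¹ • x ∈ Metric.sphere (0 : EuclideanSpace ℝ (Fin m)) 1 := by
      simp [norm_smul, abs_of_pos hnx, inv_mul_cancel₀ hnx.ne']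
    have hle := hmin humem
    have hscale : ⟪‖x‖⁻¹ • x, L (‖x‖⁻¹ • x)⟫ = ‖x‖⁻¹ * (‖x‖⁻¹ * ⟪x, L x⟫) := by
      rw [LinearMap.map_smul, real_inner_smul_left, real_inner_smul_right]
    simp only [Set.mem_setOf_eq] at hle
    rw [hscale] at hle
    have h2 : ⟪x₀, L x₀⟫ * ‖x‖^2 ≤ ‖x‖⁻¹ * (‖x‖⁻¹ * ⟪x, L x⟫) * ‖x‖^2 := by
      nlinarith [sq_nonneg ‖x‖]
    calc ⟪x₀, L x₀⟫ * ‖x‖^2 ≤ ‖x‖⁻¹ * (‖x‖⁻¹ * ⟪x, L x⟫) * ‖x‖^2 := h2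
      _ = ⟪x, L x⟫ := by
        have h3 : ‖x‖⁻¹ * ‖x‖ = 1 := inv_mul_cancel₀ hnx.ne'
        linear_combination ((‖x‖⁻¹ * ‖x‖ + 1) * ⟪x, L x⟫) * h3

lemma lcp_norm_sq {m : ℕ} (v : EuclideanSpace ℝ (Fin m)) : ‖v‖^2 = ∑ i, (v i)^2 := by
  simp [PiLp.norm_sq_eq_of_L2, Real.norm_eq_abs, sq_abs]

set_option maxHeartbeats 1000000 in
theorem lcp_test {m : ℕ} (A : Matrix (Fin m) (Fin m) ℝ)
    (B : Fin m → ℝ) (hA : A.PosDef) (hm : 0 < m)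
    (α : ℝ) (hα0 : 0 < α)
    (hα : ∀ x : EuclideanSpace ℝ (Fin m), α * ‖x‖ ^ 2 ≤ ⟪x, (Matrix.toEuclideanLin A) x⟫) :
    ∃! lam : Fin m → ℝ, (∀ i, 0 ≤ (B + A.mulVec lam) i) ∧
      (∀ i, 0 ≤ lam i) ∧ (∀ i, lam i * (B + A.mulVec lam) i = 0) := by
  classical
  set eqv := WithLp.equiv 2 (Fin m → ℝ) with heqv
  set Lc : EuclideanSpace ℝ (Fin m) →L[ℝ] EuclideanSpace ℝ (Fin m) := LinearMap.toContinuousLinearMap (Matrix.toEuclideanLin A) with hLcdef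
  have hLc : ∀ x : EuclideanSpace ℝ (Fin m), Lc x = eqv.symm (A.mulVec (eqv x)) := by
    intro x
    simp only [hLcdef, LinearMap.coe_toContinuousLinearMap']
    exact Matrix.toEuclideanLin_apply A x
  have hLci : ∀ (x : EuclideanSpace ℝ (Fin m)) (i : Fin m), Lc x i = A.mulVec (eqv x) i := by
    intro x i; rw [hLc]; rfl
  have hα' : ∀ x : EuclideanSpace ℝ (Fin m), α * ‖x‖ ^ 2 ≤ ⟪x, Lc x⟫ := by
    intro x
    have : Lc x = Matrix.toEuclideanLin A x := by simp [hLcdef]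
    rw [this]; exact hα x
  set M : ℝ := ‖Lc‖ with hMdef
  have hMb : ∀ x : EuclideanSpace ℝ (Fin m), ‖Lc x‖ ≤ M * ‖x‖ := fun x => Lc.le_opNorm x
  -- α ≤ M
  haveI : Nonempty (Fin m) := ⟨⟨0, hm⟩⟩
  obtain ⟨z, hz⟩ : (Metric.sphere (0:EuclideanSpace ℝ (Fin m)) 1).Nonempty :=
    NormedSpace.sphere_nonempty.mpr zero_le_one
  have hznorm : ‖z‖ = 1 := by simpa using hz
  have hαM : α ≤ M := by
    have h1 := hα' z
    have h2 : ⟪z, Lc z⟫ ≤ ‖z‖ * ‖Lc z‖ := real_inner_le_norm z (Lc z)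
    have h3 := hMb z
    rw [hznorm] at h1 h2 h3
    simpa using h1.trans (h2.trans (by simpa using h3))
  have hM0 : 0 < M := lt_of_lt_of_le hα0 hαM
  set c : ℝ := α / M ^ 2 with hcdef
  have hc0 : 0 < c := by positivity
  set k : ℝ := Real.sqrt (1 - α ^ 2 / M ^ 2) with hkdef
  have harg0 : 0 ≤ 1 - α ^ 2 / M ^ 2 := by
    rw [sub_nonneg, div_le_one (by positivity)]
    exact pow_le_pow_left₀ hα0.le hαM 2
  have hk0 : 0 ≤ k := Real.sqrt_nonneg _
  have hk1 : k < 1 := by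
    have h := Real.sqrt_lt_sqrt harg0 (by
      have : 0 < α ^ 2 / M ^ 2 := by positivity
      linarith : 1 - α ^ 2 / M ^ 2 < 1)
    simpa [hkdef] using h
  have hksq : k ^ 2 = 1 - α ^ 2 / M ^ 2 := Real.sq_sqrt harg0
  -- the map
  set T : EuclideanSpace ℝ (Fin m) → EuclideanSpace ℝ (Fin m) := fun x => eqv.symm (fun i => max 0 (x i - c * (B i + A.mulVec (eqv x) i)))
    with hTdef
  have hTi : ∀ (x : EuclideanSpace ℝ (Fin m)) (i : Fin m),
      T x i = max 0 (x i - c * (B i + A.mulVec (eqv x) i)) := by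
    intro x i; rfl
  have hevi : ∀ (x : EuclideanSpace ℝ (Fin m)) (i : Fin m), eqv x i = x i := fun _ _ => rfl
  -- contraction estimate
  have hest : ∀ x y : EuclideanSpace ℝ (Fin m), dist (T x) (T y) ≤ k * dist x y := by
    intro x y
    set u : EuclideanSpace ℝ (Fin m) := x - y with hu
    set w : EuclideanSpace ℝ (Fin m) := u - c • Lc u with hw
    have hwi : ∀ i, w i = (x i - c * (B i + A.mulVec (eqv x) i))
        - (y i - c * (B i + A.mulVec (eqv y) i)) := by
      intro i
      have hmv : A.mulVec (eqv u) i = A.mulVec (eqv x) i - A.mulVec (eqv y) i := by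
        have : eqv u = eqv x - eqv y := rfl
        rw [this, Matrix.mulVec_sub, Pi.sub_apply]
      have h1 : w i = u i - c * Lc u i := by rw [hw, PiLp.sub_apply, PiLp.smul_apply, smul_eq_mul]
      have h2 : u i = x i - y i := by rw [hu, PiLp.sub_apply]
      rw [h1, h2, hLci, hmv]; ring
    have hstep1 : ‖T x - T y‖ ^ 2 ≤ ‖w‖ ^ 2 := by
      rw [lcp_norm_sq, lcp_norm_sq]
      refine Finset.sum_le_sum fun i _ => ?_
      have hTsub : (T x - T y) i = T x i - T y i := by simp
      rw [hTsub, hTi, hTi, hwi]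
      have habs : |max 0 (x i - c * (B i + A.mulVec (eqv x) i))
          - max 0 (y i - c * (B i + A.mulVec (eqv y) i))|
          ≤ |(x i - c * (B i + A.mulVec (eqv x) i))
          - (y i - c * (B i + A.mulVec (eqv y) i))| := by
        simpa [max_comm] using abs_max_sub_max_le_abs
          (x i - c * (B i + A.mulVec (eqv x) i)) (y i - c * (B i + A.mulVec (eqv y) i)) 0
      calc (max 0 (x i - c * (B i + A.mulVec (eqv x) i))
            - max 0 (y i - c * (B i + A.mulVec (eqv y) i))) ^ 2
          = |max 0 (x i - c * (B i + A.mulVec (eqv x) i))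
            - max 0 (y i - c * (B i + A.mulVec (eqv y) i))| ^ 2 := (sq_abs _).symm
        _ ≤ |(x i - c * (B i + A.mulVec (eqv x) i))
            - (y i - c * (B i + A.mulVec (eqv y) i))| ^ 2 :=
            pow_le_pow_left₀ (abs_nonneg _) habs 2
        _ = _ := sq_abs _
    have hstep2 : ‖w‖ ^ 2 ≤ k ^ 2 * ‖u‖ ^ 2 := by
      have hns : ‖w‖ ^ 2 = ‖u‖ ^ 2 - 2 * ⟪u, c • Lc u⟫ + ‖c • Lc u‖ ^ 2 := by
        rw [hw]; exact norm_sub_sq_real u (c • Lc u)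
      have hinner : ⟪u, c • Lc u⟫ = c * ⟪u, Lc u⟫ := real_inner_smul_right u (Lc u) c
      have hnsm : ‖c • Lc u‖ = c * ‖Lc u‖ := by
        rw [norm_smul, Real.norm_eq_abs, abs_of_pos hc0]
      have h1 : α * ‖u‖ ^ 2 ≤ ⟪u, Lc u⟫ := hα' u
      have h2 : ‖Lc u‖ ≤ M * ‖u‖ := hMb u
      have h3 : ‖Lc u‖ ^ 2 ≤ M ^ 2 * ‖u‖ ^ 2 := by nlinarith [norm_nonneg (Lc u), norm_nonneg u]
      have key1 : c * (α * ‖u‖ ^ 2) ≤ c * ⟪u, Lc u⟫ := mul_le_mul_of_nonneg_left h1 hc0.le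
      have key2 : (c * ‖Lc u‖) ^ 2 ≤ α * c * ‖u‖ ^ 2 := by
        have he : (c * ‖Lc u‖) ^ 2 = c ^ 2 * ‖Lc u‖ ^ 2 := by ring
        rw [he]
        calc c ^ 2 * ‖Lc u‖ ^ 2 ≤ c ^ 2 * (M ^ 2 * ‖u‖ ^ 2) :=
              mul_le_mul_of_nonneg_left h3 (by positivity)
          _ = α * c * ‖u‖ ^ 2 := by rw [hcdef]; field_simp
      calc ‖w‖ ^ 2 = ‖u‖ ^ 2 - 2 * (c * ⟪u, Lc u⟫) + (c * ‖Lc u‖) ^ 2 := by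
            rw [hns, hinner, hnsm]
        _ ≤ (1 - c * α) * ‖u‖ ^ 2 := by linarith [key1, key2]
        _ = k ^ 2 * ‖u‖ ^ 2 := by rw [hksq, hcdef]; ring
    have hfinal : ‖T x - T y‖ ≤ k * ‖u‖ := by
      have hsq : ‖T x - T y‖ ^ 2 ≤ (k * ‖u‖) ^ 2 := by
        rw [mul_pow]; exact hstep1.trans hstep2
      calc ‖T x - T y‖ = Real.sqrt (‖T x - T y‖ ^ 2) := (Real.sqrt_sq (norm_nonneg _)).symm
        _ ≤ Real.sqrt ((k * ‖u‖) ^ 2) := Real.sqrt_le_sqrt hsq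
        _ = k * ‖u‖ := Real.sqrt_sq (by positivity)
    rw [dist_eq_norm, dist_eq_norm]
    exact hfinal
  set K : NNReal := k.toNNReal with hK
  have hKk : (K : ℝ) = k := Real.coe_toNNReal k hk0
  have hcontr : ContractingWith K T := by
    constructor
    · rw [← NNReal.coe_lt_coe, hKk]; exact hk1
    · exact LipschitzWith.of_dist_le_mul fun x y => by rw [hKk]; exact hest x y
  set fp : EuclideanSpace ℝ (Fin m) := ContractingWith.fixedPoint T hcontr with hfp
  have hfix : T fp = fp := hcontr.fixedPoint_isFixedPt
  set lam : Fin m → ℝ := eqv fp with hlam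
  have hml : A.mulVec (eqv fp) = A.mulVec lam := rfl
  have heqi : ∀ i, max 0 (lam i - c * (B i + A.mulVec lam i)) = lam i := by
    intro i
    have h := congrArg (fun v : EuclideanSpace ℝ (Fin m) => v i) hfix
    simp only at h
    rw [hTi] at h
    exact h
  refine ⟨lam, ⟨?_, ?_, ?_⟩, ?_⟩
  · intro i
    rcases le_or_gt (lam i - c * (B i + A.mulVec lam i)) 0 with h | h
    · have h0 : lam i = 0 := ((heqi i).symm.trans (max_eq_left h))
      rw [h0] at h
      have : 0 ≤ B i + A.mulVec lam i := by nlinarith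
      simpa using this
    · have h0 : lam i = lam i - c * (B i + A.mulVec lam i) :=
        ((heqi i).symm.trans (max_eq_right h.le))
      have : c * (B i + A.mulVec lam i) = 0 := by linarith
      have : B i + A.mulVec lam i = 0 := by
        rcases mul_eq_zero.mp this with h' | h'
        · exact absurd h' hc0.ne'
        · exact h'
      simp [this]
  · intro i
    rw [← heqi i]; exact le_max_left 0 _
  · intro i
    rcases le_or_gt (lam i - c * (B i + A.mulVec lam i)) 0 with h | h
    · have h0 : lam i = 0 := ((heqi i).symm.trans (max_eq_left h))
      simp [h0]
    · have h0 : lam i = lam i - c * (B i + A.mulVec lam i) :=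
        ((heqi i).symm.trans (max_eq_right h.le))
      have : B i + A.mulVec lam i = 0 := by
        rcases mul_eq_zero.mp (by linarith : c * (B i + A.mulVec lam i) = 0) with h' | h'
        · exact absurd h' hc0.ne'
        · exact h'
      simp [this]
  · intro y ⟨hy1, hy2, hy3⟩
    have hyfix : T (eqv.symm y) = eqv.symm y := by
      rw [hTdef]
      apply congrArg
      funext i
      have hyi : eqv.symm y i = y i := rfl
      have hyy : eqv (eqv.symm y) = y := eqv.apply_symm_apply y
      rw [hyi, hyy]
      rcases mul_eq_zero.mp (hy3 i) with h | h
      · have hw0 : 0 ≤ B i + A.mulVec y i := by simpa using hy1 i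
        rw [h]
        have : 0 - c * (B i + A.mulVec y i) ≤ 0 := by nlinarith
        exact max_eq_left this
      · have : (B : Fin m → ℝ) i + A.mulVec y i = 0 := by simpa using h
        rw [this]
        simpa using hy2 i
    have : eqv.symm y = fp := hcontr.fixedPoint_unique hyfix
    rw [hlam, ← this]
    exact (eqv.apply_symm_apply y).symm

theorem lcp_posdef_exists_unique {m : ℕ} (A : Matrix (Fin m) (Fin m) ℝ)
    (B : Fin m → ℝ) (hA : A.PosDef) :
    ∃! lam : Fin m → ℝ, (∀ i, 0 ≤ (B + A.mulVec lam) i) ∧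
      (∀ i, 0 ≤ lam i) ∧ (∀ i, lam i * (B + A.mulVec lam) i = 0) := by
  rcases Nat.eq_zero_or_pos m with hm0 | hm
  · subst hm0
    exact ⟨0, ⟨fun i => i.elim0, fun i => i.elim0, fun i => i.elim0⟩,
      fun y _ => funext fun i => i.elim0⟩
  · obtain ⟨α, hα0, hα⟩ := lcp_coercive A hA hm
    exact lcp_test A B hA hm α hα0 hα
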